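/- Let σ ≥ 1 and ρ > 0, and let a₁,…,a_r ∈ ℝⁿ be unit vectors with Σ_i a_i a_iᵀ ⪯ σ·Id and |⟨a_i, a_j⟩| ≤ ρ for all i ≠ j. Then ‖Σ_{i=1}^r a_i^{⊗3}‖_F² ≥ (1 − ρσ)·r and ‖Σ_{i=1}^r a_i^{⊗6}‖_F² ≤ (1 + ρ⁴σ)·r. -/

import Mathlib

open Matrix

theorem keyid {n r : ℕ} (a : Fin r → Fin n → ℝ) (k : ℕ) :
    ∑ f : Fin k → Fin n, (∑ i, ∏ t, a i (f t)) ^ 2 =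
      ∑ i, ∑ j, (a i ⬝ᵥ a j) ^ k := by
  simp only [sq, Finset.sum_mul_sum]
  rw [Finset.sum_comm]
  congr 1; ext i
  rw [Finset.sum_comm]
  congr 1; ext j
  have h1 : ∀ f : Fin k → Fin n, (∏ t, a i (f t)) * ∏ t, a j (f t)
      = ∏ t, (a i (f t) * a j (f t)) := by
    intro f; rw [← Finset.prod_mul_distrib]
  simp only [h1]
  have h2 : (a i ⬝ᵥ a j) ^ k = ∏ _t : Fin k, ∑ m, a i m * a j m := by
    simp [dotProduct]
  rw [h2, ← Fintype.piFinset_univ, Finset.prod_univ_sum]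

theorem rowbound {n r : ℕ} (σ : ℝ) (a : Fin r → Fin n → ℝ) (i : Fin r)
    (hunit : ∀ i, a i ⬝ᵥ a i = 1)
    (hPSD : (σ • (1 : Matrix (Fin n) (Fin n) ℝ) -
      ∑ i, vecMulVec (a i) (a i)).PosSemidef) :
    ∑ j, (a i ⬝ᵥ a j) ^ 2 ≤ σ := by
  have h := hPSD.dotProduct_mulVec_nonneg (a i)
  simp only [star_trivial, sub_mulVec, smul_mulVec, one_mulVec,
    dotProduct_sub, dotProduct_smul, hunit i, smul_eq_mul, mul_one] at h
  have h2 : a i ⬝ᵥ ((∑ j, vecMulVec (a j) (a j)) *ᵥ a i) = ∑ j, (a i ⬝ᵥ a j)^2 := by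
    simp only [mulVec, dotProduct, vecMulVec_apply, Finset.sum_apply, Matrix.sum_apply,
      Finset.mul_sum, Finset.sum_mul, sq]
    have swap : ∀ x : Fin n, (∑ y : Fin n, ∑ j : Fin r, a i x * (a j x * a j y * a i y))
        = ∑ j : Fin r, ∑ y : Fin n, a i x * (a j x * a j y * a i y) :=
      fun x => Finset.sum_comm
    simp only [swap]
    rw [Finset.sum_comm]
    apply Finset.sum_congr rfl; intro j _
    apply Finset.sum_congr rfl; intro y _
    apply Finset.sum_congr rfl; intro x _
    ring
  rw [h2] at h
  linarith

/-- For `(σ,ρ)`-incoherent unit vectors `a₁,…,a_r` (i.e. `Σ aᵢaᵢᵀ ⪯ σ·Id` and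
`|⟨aᵢ,aⱼ⟩| ≤ ρ` for `i ≠ j`), one has
`‖Σ aᵢ^{⊗3}‖_F² ≥ (1 − ρσ)·r` and `‖Σ aᵢ^{⊗6}‖_F² ≤ (1 + ρ⁴σ)·r`. -/
theorem stmt_7 {n r : ℕ} (σ ρ : ℝ) (hσ : 1 ≤ σ) (hρ : 0 < ρ)
    (a : Fin r → (Fin n → ℝ))
    (hunit : ∀ i, a i ⬝ᵥ a i = 1)
    (hPSD : (σ • (1 : Matrix (Fin n) (Fin n) ℝ) -
      ∑ i, vecMulVec (a i) (a i)).PosSemidef)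
    (hρbound : ∀ i j, i ≠ j → |a i ⬝ᵥ a j| ≤ ρ) :
    (1 - ρ * σ) * r ≤ ∑ f : Fin 3 → Fin n, (∑ i, ∏ t, a i (f t)) ^ 2 ∧
    ∑ f : Fin 6 → Fin n, (∑ i, ∏ t, a i (f t)) ^ 2 ≤ (1 + ρ ^ 4 * σ) * r := by
  rw [keyid a 3, keyid a 6]
  set c : Fin r → Fin r → ℝ := fun i j => a i ⬝ᵥ a j with hc
  have hcd : ∀ i, c i i = 1 := hunit
  have hT : ∀ i, ∑ j ∈ Finset.univ.erase i, c i j ^ 2 ≤ σ - 1 := by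
    intro i
    have h := rowbound σ a i hunit hPSD
    rw [← Finset.add_sum_erase _ _ (Finset.mem_univ i), hunit i, one_pow] at h
    linarith
  have hTnn : ∀ i, (0:ℝ) ≤ ∑ j ∈ Finset.univ.erase i, c i j ^ 2 :=
    fun i => Finset.sum_nonneg fun j _ => sq_nonneg _
  constructor
  · -- lower bound, k = 3
    have h3 : ∀ i, (1:ℝ) - ρ * σ ≤ ∑ j, c i j ^ 3 := by
      intro i
      rw [← Finset.add_sum_erase _ _ (Finset.mem_univ i), hcd i, one_pow]
      have habs : |∑ j ∈ Finset.univ.erase i, c i j ^ 3|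
          ≤ ρ * ∑ j ∈ Finset.univ.erase i, c i j ^ 2 := by
        refine (Finset.abs_sum_le_sum_abs _ _).trans ?_
        rw [Finset.mul_sum]
        refine Finset.sum_le_sum fun j hj => ?_
        have hne : i ≠ j := fun h => (Finset.ne_of_mem_erase hj) h.symm
        have h1 := hρbound i j hne
        calc |c i j ^ 3| = c i j ^ 2 * |c i j| := by
              rw [abs_pow, pow_succ, sq_abs]
          _ ≤ c i j ^ 2 * ρ := mul_le_mul_of_nonneg_left h1 (sq_nonneg _)
          _ = ρ * c i j ^ 2 := mul_comm _ _
      have h4 : ρ * ∑ j ∈ Finset.univ.erase i, c i j ^ 2 ≤ ρ * (σ - 1) :=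
        mul_le_mul_of_nonneg_left (hT i) hρ.le
      have h5 := neg_abs_le (∑ j ∈ Finset.univ.erase i, c i j ^ 3)
      nlinarith
    calc (1 - ρ * σ) * r = ∑ _i : Fin r, (1 - ρ * σ) := by
          simp [mul_comm]; ring
      _ ≤ ∑ i, ∑ j, c i j ^ 3 := Finset.sum_le_sum fun i _ => h3 i
  · -- upper bound, k = 6
    have h6 : ∀ i, ∑ j, c i j ^ 6 ≤ 1 + ρ ^ 4 * σ := by
      intro i
      rw [← Finset.add_sum_erase _ _ (Finset.mem_univ i), hcd i, one_pow]
      have hsum : ∑ j ∈ Finset.univ.erase i, c i j ^ 6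
          ≤ ρ ^ 4 * ∑ j ∈ Finset.univ.erase i, c i j ^ 2 := by
        rw [Finset.mul_sum]
        refine Finset.sum_le_sum fun j hj => ?_
        have hne : i ≠ j := fun h => (Finset.ne_of_mem_erase hj) h.symm
        have h1 := hρbound i j hne
        have hc2 : c i j ^ 2 ≤ ρ ^ 2 := by
          nlinarith [abs_nonneg (c i j), sq_abs (c i j)]
        nlinarith [sq_nonneg (c i j), sq_nonneg (ρ^2 - c i j ^2),
          mul_nonneg (sq_nonneg (c i j)) (sub_nonneg.2 hc2)]
      have h4 : ρ ^ 4 * ∑ j ∈ Finset.univ.erase i, c i j ^ 2 ≤ ρ ^ 4 * (σ - 1) :=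
        mul_le_mul_of_nonneg_left (hT i) (by positivity)
      nlinarith [pow_pos hρ 4]
    calc ∑ i, ∑ j, c i j ^ 6 ≤ ∑ _i : Fin r, (1 + ρ ^ 4 * σ) :=
          Finset.sum_le_sum fun i _ => h6 i
      _ = (1 + ρ ^ 4 * σ) * r := by simp [mul_comm]; ring
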